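/- Let d ≥ 2 be an integer, F ∈ L²([0,∞); ℂ), and let p = I × ω be a d-adic tile with I = [d^κ·n, d^κ·(n+1)) and ω = [d^{−κ}·l, d^{−κ}·(l+1)), where κ, n, l ∈ ℤ and n, l ≥ 0. Let k₀ := d^κ·n be the left endpoint of I and let k ∈ I. Let G_ω(k₀,·) and G_ω(k,·) be solutions of the d-adic scattering ODE with potential F·1_ω. Then there exists an integer j, depending on k but not on x, such that for every x ≥ 0, writing G_ω(k₀,x) = [[a, b], [conj(b), conj(a)]], one has G_ω(k,x) = [[a, γ^j·b], [conj(γ^j·b), conj(a)]]. In particular the upper-left entry of G_ω(k,x) equals that of G_ω(k₀,x) for all k ∈ I. -/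

import Mathlib

open MeasureTheory Set
open Topology Filter

/-- The `n`-th base-`d` digit of a nonnegative real `x`:  `⌊x·d^(−n)⌋ mod d`. -/
noncomputable def dDigit (d : ℕ) (x : ℝ) (n : ℤ) : ℕ :=
  (⌊x * (d : ℝ) ^ (-n)⌋ % d).toNat

/-- The character function `w(k,x) = γ^{∑_{n∈ℤ} kₙ·x_{−1−n}}`. -/
noncomputable def charFun (d : ℕ) (γ : ℂ) (k x : ℝ) : ℂ :=
  γ ^ (∑ᶠ n : ℤ, dDigit d k n * dDigit d x (-1 - n))

/-- The matrix potential `W(k,x)`. -/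
noncomputable def Wmat (d : ℕ) (γ : ℂ) (F : ℝ → ℂ) (k x : ℝ) :
    Matrix (Fin 2) (Fin 2) ℂ :=
  !![0, F x * charFun d γ k x;
     (starRingEnd ℂ) (F x * charFun d γ k x), 0]

/-- `G` is a solution of the `d`-adic scattering ODE with potential `F`
at spectral parameter `k`. -/
def IsSolution (d : ℕ) (γ : ℂ) (F : ℝ → ℂ) (k : ℝ)
    (G : ℝ → Matrix (Fin 2) (Fin 2) ℂ) : Prop :=
  ContinuousOn G (Set.Ici 0) ∧
  ∀ x : ℝ, 0 ≤ x → ∀ i j : Fin 2,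
    G x i j = (1 : Matrix (Fin 2) (Fin 2) ℂ) i j +
      ∫ t in (0:ℝ)..x, (Wmat d γ F k t * G t) i j

lemma floor_eq_floor_div {M : ℕ} (hM : 0 < M) {a : ℤ} {y : ℝ}
    (h1 : (a : ℝ) / M ≤ y) (h2 : y < ((a : ℝ) + 1) / M) :
    ⌊y⌋ = ⌊(a : ℝ) / (M : ℝ)⌋ := by
  have hMR : (0:ℝ) < M := by exact_mod_cast hM
  have hc1 : ((⌊(a : ℝ) / M⌋ : ℤ) : ℝ) ≤ y := le_trans (Int.floor_le _) h1
  have hlt : (a : ℝ) / M < ⌊(a : ℝ) / M⌋ + 1 := Int.lt_floor_add_one _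
  have h3 : (a : ℝ) < (⌊(a : ℝ) / M⌋ + 1) * M := by rwa [div_lt_iff₀ hMR] at hlt
  have h4 : a < (⌊(a : ℝ) / M⌋ + 1) * M := by exact_mod_cast h3
  have h5 : a + 1 ≤ (⌊(a : ℝ) / M⌋ + 1) * M := h4
  have h6 : ((a : ℝ) + 1) / M ≤ ((⌊(a : ℝ) / M⌋ : ℤ) : ℝ) + 1 := by
    rw [div_le_iff₀ hMR]
    exact_mod_cast h5
  rw [Int.floor_eq_iff]
  exact ⟨hc1, lt_of_lt_of_le h2 h6⟩

lemma floor_cell (d : ℕ) (hd : 1 ≤ d) {κ m : ℤ} (hm : κ ≤ m) {a : ℤ} {x : ℝ}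
    (hx1 : (d : ℝ) ^ κ * a ≤ x) (hx2 : x < (d : ℝ) ^ κ * ((a : ℝ) + 1)) :
    ⌊x * (d : ℝ) ^ (-m)⌋ = ⌊(a : ℝ) / ((d ^ (m - κ).toNat : ℕ) : ℝ)⌋ := by
  have hd0 : (0:ℝ) < d := by exact_mod_cast Nat.lt_of_lt_of_le Nat.zero_lt_one hd
  set M : ℕ := d ^ (m - κ).toNat with hMdef
  have hM0 : 0 < M := pow_pos (by omega) _
  have hMR : ((M : ℝ)) = (d:ℝ) ^ (m - κ) := by
    rw [hMdef]
    push_cast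
    rw [← zpow_natCast (d:ℝ), Int.toNat_of_nonneg (by omega)]
  have e : (d:ℝ)^κ * (d:ℝ)^(-m) = ((M:ℝ))⁻¹ := by
    rw [hMR, ← zpow_neg, ← zpow_add₀ (ne_of_gt hd0)]
    congr 1
    ring
  have hpos : (0:ℝ) < (d:ℝ) ^ (-m) := zpow_pos hd0 _
  have h1 : (a : ℝ) / M ≤ x * (d:ℝ)^(-m) := by
    have h := mul_le_mul_of_nonneg_right hx1 hpos.le
    calc (a:ℝ)/M = (d:ℝ)^κ * a * (d:ℝ)^(-m) := by
          rw [div_eq_mul_inv, ← e]; ring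
      _ ≤ x * (d:ℝ)^(-m) := h
  have h2 : x * (d:ℝ)^(-m) < ((a:ℝ) + 1) / M := by
    have h := mul_lt_mul_of_pos_right hx2 hpos
    calc x * (d:ℝ)^(-m) < (d:ℝ)^κ * ((a:ℝ)+1) * (d:ℝ)^(-m) := h
      _ = ((a:ℝ)+1) / M := by rw [div_eq_mul_inv, ← e]; ring
  exact floor_eq_floor_div hM0 h1 h2

lemma dDigit_congr_cell (d : ℕ) (hd : 1 ≤ d) {κ m : ℤ} (hm : κ ≤ m) {a : ℤ} {x y : ℝ}
    (hx1 : (d : ℝ) ^ κ * a ≤ x) (hx2 : x < (d : ℝ) ^ κ * ((a : ℝ) + 1))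
    (hy1 : (d : ℝ) ^ κ * a ≤ y) (hy2 : y < (d : ℝ) ^ κ * ((a : ℝ) + 1)) :
    dDigit d x m = dDigit d y m := by
  unfold dDigit
  rw [floor_cell d hd hm hx1 hx2, ← floor_cell d hd hm hy1 hy2]

lemma dDigit_eq_zero (d : ℕ) (hd : 1 ≤ d) {m : ℤ} {y : ℝ} (h0 : 0 ≤ y)
    (h : y < (d:ℝ)^m) : dDigit d y m = 0 := by
  have hd0 : (0:ℝ) < d := by exact_mod_cast Nat.lt_of_lt_of_le Nat.zero_lt_one hd
  have hpos : (0:ℝ) < (d:ℝ) ^ (-m) := zpow_pos hd0 _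
  have hfl : ⌊y * (d:ℝ)^(-m)⌋ = 0 := by
    rw [Int.floor_eq_zero_iff]
    constructor
    · exact mul_nonneg h0 hpos.le
    · have := mul_lt_mul_of_pos_right h hpos
      rwa [← zpow_add₀ (ne_of_gt hd0), add_neg_cancel, zpow_zero] at this
  unfold dDigit
  rw [hfl]
  simp

lemma dDigit_grid_zero (d : ℕ) (hd : 1 ≤ d) {κ m : ℤ} (hm : m < κ) {a : ℤ} (_ha : 0 ≤ a) :
    dDigit d ((d:ℝ)^κ * a) m = 0 := by
  have hd0 : (0:ℝ) < d := by exact_mod_cast Nat.lt_of_lt_of_le Nat.zero_lt_one hd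
  have e : ((d:ℝ)^κ * a) * (d:ℝ)^(-m) = ((a * d ^ (κ - m).toNat : ℤ) : ℝ) := by
    push_cast
    rw [← zpow_natCast (d:ℝ), Int.toNat_of_nonneg (by omega : (0:ℤ) ≤ κ - m)]
    calc ((d:ℝ)^κ * a) * (d:ℝ)^(-m) = a * ((d:ℝ)^κ * (d:ℝ)^(-m)) := by ring
      _ = a * (d:ℝ)^(κ - m) := by rw [show κ - m = κ + -m by ring, zpow_add₀ (ne_of_gt hd0)]
  unfold dDigit
  rw [e, Int.floor_intCast]
  have ht : (κ - m).toNat = (κ - m - 1).toNat + 1 := by omega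
  rw [ht, pow_succ]
  push_cast
  rw [← mul_assoc, Int.mul_emod_left]
  simp

lemma digit_support_finite (d : ℕ) (hd : 2 ≤ d) {k x : ℝ} (hk : 0 ≤ k) (hx : 0 ≤ x) :
    (Function.support fun m : ℤ => (dDigit d k m * dDigit d x (-1 - m) : ℕ)).Finite := by
  have hd1 : (1:ℝ) < d := by exact_mod_cast hd
  have hd1' : 1 ≤ d := by omega
  obtain ⟨Bk, hBk⟩ := pow_unbounded_of_one_lt k hd1
  obtain ⟨Bx, hBx⟩ := pow_unbounded_of_one_lt x hd1
  apply Set.Finite.subset (Finset.Icc (-(Bx:ℤ) - 1) (Bk:ℤ)).finite_toSet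
  intro m hm
  simp only [Function.mem_support] at hm
  simp only [Finset.coe_Icc, Set.mem_Icc]
  constructor
  · by_contra hcon
    push_neg at hcon
    apply hm
    have hzx : dDigit d x (-1 - m) = 0 := by
      apply dDigit_eq_zero d hd1' hx
      calc x < (d:ℝ)^Bx := hBx
        _ = (d:ℝ)^(Bx:ℤ) := by rw [zpow_natCast]
        _ ≤ (d:ℝ)^(-1-m) := zpow_le_zpow_right₀ hd1.le (by omega)
    rw [hzx, Nat.mul_zero]
  · by_contra hcon
    push_neg at hcon
    apply hm
    have hzk : dDigit d k m = 0 := by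
      apply dDigit_eq_zero d hd1' hk
      calc k < (d:ℝ)^Bk := hBk
        _ = (d:ℝ)^(Bk:ℤ) := by rw [zpow_natCast]
        _ ≤ (d:ℝ)^m := zpow_le_zpow_right₀ hd1.le (by omega)
    rw [hzk, Nat.zero_mul]

lemma exponent_split (d : ℕ) (hd : 2 ≤ d) (κ n l : ℤ) (hn : 0 ≤ n) (hl : 0 ≤ l)
    {k x : ℝ} (hk1 : (d:ℝ)^κ * n ≤ k) (hk2 : k < (d:ℝ)^κ * ((n:ℝ) + 1))
    (hx1 : (d:ℝ)^(-κ) * l ≤ x) (hx2 : x < (d:ℝ)^(-κ) * ((l:ℝ) + 1)) :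
    (∑ᶠ m : ℤ, dDigit d k m * dDigit d x (-1 - m)) =
      (∑ᶠ m : ℤ, dDigit d ((d:ℝ)^κ * n) m * dDigit d x (-1 - m)) +
      (∑ᶠ m : ℤ, if m < κ then dDigit d k m * dDigit d ((d:ℝ)^(-κ) * l) (-1 - m) else 0) := by
  have hd1 : 1 ≤ d := by omega
  have hd0 : (0:ℝ) < d := by exact_mod_cast Nat.lt_of_lt_of_le Nat.zero_lt_one hd1
  have hκpos : (0:ℝ) < (d:ℝ)^κ := zpow_pos hd0 _
  have hκpos' : (0:ℝ) < (d:ℝ)^(-κ) := zpow_pos hd0 _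
  have hn' : (0:ℝ) ≤ (n:ℝ) := by exact_mod_cast hn
  have hl' : (0:ℝ) ≤ (l:ℝ) := by exact_mod_cast hl
  have hk0 : 0 ≤ k := le_trans (mul_nonneg hκpos.le hn') hk1
  have hx0 : 0 ≤ x := le_trans (mul_nonneg hκpos'.le hl') hx1
  have hk₀0 : (0:ℝ) ≤ (d:ℝ)^κ * n := mul_nonneg hκpos.le hn'
  have hx₀0 : (0:ℝ) ≤ (d:ℝ)^(-κ) * l := mul_nonneg hκpos'.le hl'
  have hk₀2 : (d:ℝ)^κ * n < (d:ℝ)^κ * ((n:ℝ) + 1) := by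
    apply mul_lt_mul_of_pos_left (by linarith) hκpos
  have hx₀2 : (d:ℝ)^(-κ) * l < (d:ℝ)^(-κ) * ((l:ℝ) + 1) := by
    apply mul_lt_mul_of_pos_left (by linarith) hκpos'
  have hpt : ∀ m : ℤ,
      (dDigit d k m * dDigit d x (-1 - m) : ℕ) =
      dDigit d ((d:ℝ)^κ * n) m * dDigit d x (-1 - m) +
      (if m < κ then dDigit d k m * dDigit d ((d:ℝ)^(-κ) * l) (-1 - m) else 0) := by
    intro m
    by_cases hm : κ ≤ m
    · have hcongr : dDigit d k m = dDigit d ((d:ℝ)^κ * n) m :=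
        dDigit_congr_cell d hd1 hm hk1 hk2 (le_refl _) hk₀2
      rw [if_neg (not_lt.mpr hm), hcongr, add_zero]
    · push_neg at hm
      have h2 : dDigit d ((d:ℝ)^κ * n) m = 0 := dDigit_grid_zero d hd1 hm hn
      have h3 : dDigit d x (-1 - m) = dDigit d ((d:ℝ)^(-κ) * l) (-1 - m) :=
        dDigit_congr_cell d hd1 (by omega : -κ ≤ -1 - m) hx1 hx2 (le_refl _) hx₀2
      rw [if_pos hm, h2, Nat.zero_mul, Nat.zero_add, h3]
  rw [finsum_congr hpt]
  apply finsum_add_distrib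
  · exact digit_support_finite d hd hk₀0 hx0
  · apply Set.Finite.subset (digit_support_finite d hd hk0 hx₀0)
    intro m hm
    simp only [Function.mem_support] at hm ⊢
    intro hz
    apply hm
    split_ifs
    · exact hz
    · rfl


lemma volterra_unique (c : ℝ → ℂ)
    (hc : ∀ x : ℝ, 0 ≤ x → IntervalIntegrable c volume 0 x)
    (G H : ℝ → Matrix (Fin 2) (Fin 2) ℂ)
    (hGc : ContinuousOn G (Ici 0)) (hHc : ContinuousOn H (Ici 0))
    (hG : ∀ x : ℝ, 0 ≤ x → ∀ i j : Fin 2, G x i j = (1 : Matrix (Fin 2) (Fin 2) ℂ) i j +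
      ∫ t in (0:ℝ)..x, (!![0, c t; (starRingEnd ℂ) (c t), 0] * G t) i j)
    (hH : ∀ x : ℝ, 0 ≤ x → ∀ i j : Fin 2, H x i j = (1 : Matrix (Fin 2) (Fin 2) ℂ) i j +
      ∫ t in (0:ℝ)..x, (!![0, c t; (starRingEnd ℂ) (c t), 0] * H t) i j) :
    ∀ x : ℝ, 0 ≤ x → G x = H x := by
  set Wc : ℝ → Matrix (Fin 2) (Fin 2) ℂ := fun t => !![0, c t; (starRingEnd ℂ) (c t), 0]
    with hWcdef
  -- entry continuity
  have entryCont : ∀ (X : ℝ → Matrix (Fin 2) (Fin 2) ℂ), ContinuousOn X (Ici 0) →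
      ∀ i j : Fin 2, ContinuousOn (fun x => X x i j) (Ici (0:ℝ)) := by
    intro X hX i j
    exact ((continuous_apply j).comp (continuous_apply i)).comp_continuousOn hX
  -- the scalar deviation function
  set f : ℝ → ℝ := fun x => ‖G x 0 0 - H x 0 0‖ + ‖G x 0 1 - H x 0 1‖ +
      ‖G x 1 0 - H x 1 0‖ + ‖G x 1 1 - H x 1 1‖ with hfdef
  have hfc : ContinuousOn f (Ici 0) := by
    apply ContinuousOn.add
    apply ContinuousOn.add
    apply ContinuousOn.add
    all_goals exact ((entryCont G hGc _ _).sub (entryCont H hHc _ _)).norm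
  have hfnn : ∀ t : ℝ, 0 ≤ f t := by
    intro t
    have := norm_nonneg (G t 0 0 - H t 0 0)
    have := norm_nonneg (G t 0 1 - H t 0 1)
    have := norm_nonneg (G t 1 0 - H t 1 0)
    have := norm_nonneg (G t 1 1 - H t 1 1)
    simp only [hfdef]; linarith
  have hfentry : ∀ (m j : Fin 2) (t : ℝ), ‖G t m j - H t m j‖ ≤ f t := by
    intro m j t
    have h00 := norm_nonneg (G t 0 0 - H t 0 0)
    have h01 := norm_nonneg (G t 0 1 - H t 0 1)
    have h10 := norm_nonneg (G t 1 0 - H t 1 0)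
    have h11 := norm_nonneg (G t 1 1 - H t 1 1)
    fin_cases m <;> fin_cases j <;> simp only [hfdef, Fin.mk_zero, Fin.mk_one] <;> linarith
  -- integrability of conj c
  have hcconj : ∀ x : ℝ, 0 ≤ x → IntervalIntegrable (fun t => (starRingEnd ℂ) (c t)) volume 0 x := by
    intro x hx
    have h := hc x hx
    rw [intervalIntegrable_iff] at h ⊢
    refine h.norm.mono' (Complex.continuous_conj.comp_aestronglyMeasurable h.aestronglyMeasurable) ?_
    filter_upwards with t
    simp
  -- entries of Wc are interval integrable
  have hWent : ∀ (x : ℝ), 0 ≤ x → ∀ i m : Fin 2,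
      IntervalIntegrable (fun t => Wc t i m) volume 0 x := by
    intro x hx i m
    fin_cases i <;> fin_cases m <;>
      simp only [hWcdef, Matrix.cons_val', Matrix.cons_val_zero, Matrix.cons_val_one,
        Matrix.head_cons, Matrix.empty_val', Matrix.cons_val_fin_one, Matrix.head_fin_const]
    · exact intervalIntegrable_const
    · exact hc x hx
    · exact hcconj x hx
    · exact intervalIntegrable_const
  -- integrability of entries of Wc * X for X continuous
  have hWX : ∀ (X : ℝ → Matrix (Fin 2) (Fin 2) ℂ), ContinuousOn X (Ici 0) →
      ∀ (x : ℝ), 0 ≤ x → ∀ i j : Fin 2,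
      IntervalIntegrable (fun t => (Wc t * X t) i j) volume 0 x := by
    intro X hX x hx i j
    have hXe : ∀ m : Fin 2, ContinuousOn (fun t => X t m j) (uIcc (0:ℝ) x) := by
      intro m
      apply (entryCont X hX m j).mono
      rw [uIcc_of_le hx]
      exact Icc_subset_Ici_self
    have expand : (fun t => (Wc t * X t) i j) =
        fun t => (fun t => Wc t i 0) t * (fun t => X t 0 j) t +
                 (fun t => Wc t i 1) t * (fun t => X t 1 j) t := by
      funext t
      simp [Matrix.mul_apply, Fin.sum_univ_two]
    rw [expand]
    exact ((hWent x hx i 0).mul_continuousOn (hXe 0)).add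
          ((hWent x hx i 1).mul_continuousOn (hXe 1))
  -- difference equation
  have hDeq : ∀ x : ℝ, 0 ≤ x → ∀ i j : Fin 2,
      G x i j - H x i j = ∫ t in (0:ℝ)..x, (Wc t * (G t - H t)) i j := by
    intro x hx i j
    have e1 : G x i j - H x i j =
        (∫ t in (0:ℝ)..x, (Wc t * G t) i j) - ∫ t in (0:ℝ)..x, (Wc t * H t) i j := by
      rw [hG x hx i j, hH x hx i j]; ring
    rw [e1, ← intervalIntegral.integral_sub (hWX G hGc x hx i j) (hWX H hHc x hx i j)]
    congr 1
    funext t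
    simp [Matrix.mul_sub, Matrix.sub_apply]
  -- key integral inequality
  have hkey : ∀ x : ℝ, 0 ≤ x → f x ≤ 4 * ∫ t in (0:ℝ)..x, ‖c t‖ * f t := by
    intro x hx
    have hGH : ContinuousOn (fun t => G t - H t) (Ici 0) := hGc.sub hHc
    have hintD : ∀ i j : Fin 2,
        IntervalIntegrable (fun t => (Wc t * (G t - H t)) i j) volume 0 x :=
      hWX _ hGH x hx
    have hfcu : ContinuousOn f (uIcc (0:ℝ) x) := by
      apply hfc.mono
      rw [uIcc_of_le hx]; exact Icc_subset_Ici_self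
    have hcf : IntervalIntegrable (fun t => ‖c t‖ * f t) volume 0 x :=
      (hc x hx).norm.mul_continuousOn hfcu
    have hentry : ∀ i j : Fin 2, ‖G x i j - H x i j‖ ≤ ∫ t in (0:ℝ)..x, ‖c t‖ * f t := by
      intro i j
      rw [hDeq x hx i j]
      refine le_trans (intervalIntegral.norm_integral_le_integral_norm hx) ?_
      apply intervalIntegral.integral_mono_on hx (hintD i j).norm hcf
      intro t _
      have hbound : ‖(Wc t * (G t - H t)) i j‖ ≤ ‖c t‖ * f t := by
        have hmul : (Wc t * (G t - H t)) i j =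
            Wc t i 0 * (G t 0 j - H t 0 j) + Wc t i 1 * (G t 1 j - H t 1 j) := by
          simp [Matrix.mul_apply, Fin.sum_univ_two, Matrix.sub_apply]
        rw [hmul]
        have h0 := hfentry 0 j t
        have h1 := hfentry 1 j t
        have hcnn : (0:ℝ) ≤ ‖c t‖ := norm_nonneg _
        have hW00 : (!![0, c t; (starRingEnd ℂ) (c t), 0] : Matrix (Fin 2) (Fin 2) ℂ) 0 0 = 0 := rfl
        have hW01 : (!![0, c t; (starRingEnd ℂ) (c t), 0] : Matrix (Fin 2) (Fin 2) ℂ) 0 1 = c t := rfl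
        have hW10 : (!![0, c t; (starRingEnd ℂ) (c t), 0] : Matrix (Fin 2) (Fin 2) ℂ) 1 0 =
            (starRingEnd ℂ) (c t) := rfl
        have hW11 : (!![0, c t; (starRingEnd ℂ) (c t), 0] : Matrix (Fin 2) (Fin 2) ℂ) 1 1 = 0 := rfl
        fin_cases i <;> simp only [Fin.mk_zero, Fin.mk_one, hWcdef]
        · rw [hW00, hW01, zero_mul, zero_add, norm_mul]
          exact mul_le_mul_of_nonneg_left h1 hcnn
        · rw [hW10, hW11, zero_mul, add_zero, norm_mul, RCLike.norm_conj]
          exact mul_le_mul_of_nonneg_left h0 hcnn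
      exact hbound
    have e00 := hentry 0 0
    have e01 := hentry 0 1
    have e10 := hentry 1 0
    have e11 := hentry 1 1
    have hfx : f x = ‖G x 0 0 - H x 0 0‖ + ‖G x 0 1 - H x 0 1‖ +
        ‖G x 1 0 - H x 1 0‖ + ‖G x 1 1 - H x 1 1‖ := rfl
    rw [hfx]
    linarith
  -- zero-set / continuity argument
  have hfzero : ∀ b : ℝ, 0 ≤ b → f b = 0 := by
    intro b hb
    have hfcu : ContinuousOn f (uIcc (0:ℝ) b) := by
      apply hfc.mono; rw [uIcc_of_le hb]; exact Icc_subset_Ici_self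
    have hcnorm : IntervalIntegrable (fun t => ‖c t‖) volume 0 b := (hc b hb).norm
    have hint : IntervalIntegrable (fun t => ‖c t‖ * f t) volume 0 b :=
      hcnorm.mul_continuousOn hfcu
    set A : Set ℝ := {y | y ∈ Icc (0:ℝ) b ∧ ∀ t ∈ Icc (0:ℝ) y, f t = 0} with hAdef
    have hf0 : f 0 = 0 := by
      have h00 : ∀ i j : Fin 2, G 0 i j = H 0 i j := by
        intro i j
        rw [hG 0 le_rfl i j, hH 0 le_rfl i j]
        simp
      have hfx : f 0 = ‖G 0 0 0 - H 0 0 0‖ + ‖G 0 0 1 - H 0 0 1‖ +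
          ‖G 0 1 0 - H 0 1 0‖ + ‖G 0 1 1 - H 0 1 1‖ := rfl
      rw [hfx, h00 0 0, h00 0 1, h00 1 0, h00 1 1]
      simp
    have h0A : (0:ℝ) ∈ A := by
      refine ⟨⟨le_rfl, hb⟩, fun t ht => ?_⟩
      have : t = 0 := le_antisymm ht.2 ht.1
      rw [this]; exact hf0
    have hAne : A.Nonempty := ⟨0, h0A⟩
    have hbdd : BddAbove A := ⟨b, fun y hy => hy.1.2⟩
    set cc := sSup A with hccdef
    have hccle : cc ≤ b := csSup_le hAne (fun y hy => hy.1.2)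
    have hcc0 : 0 ≤ cc := le_csSup hbdd h0A
    have hzero_lt : ∀ t : ℝ, 0 ≤ t → t < cc → f t = 0 := by
      intro t ht htc
      obtain ⟨a, haA, hta⟩ := exists_lt_of_lt_csSup hAne htc
      exact haA.2 t ⟨ht, hta.le⟩
    have hfcc : f cc = 0 := by
      rcases eq_or_lt_of_le hcc0 with h | h
      · rw [← h]; exact hf0
      · have hcont : ContinuousWithinAt f (Ico 0 cc) cc :=
          (hfc.continuousWithinAt (mem_Ici.mpr hcc0)).mono (fun t ht => ht.1)
        have hne : (𝓝[Ico (0:ℝ) cc] cc).NeBot := by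
          apply mem_closure_iff_nhdsWithin_neBot.mp
          rw [closure_Ico h.ne]
          exact ⟨hcc0, le_rfl⟩
        have h2 : Filter.Tendsto f (𝓝[Ico (0:ℝ) cc] cc) (𝓝 0) := by
          refine Filter.Tendsto.congr' ?_ tendsto_const_nhds
          filter_upwards [self_mem_nhdsWithin] with t ht
          exact (hzero_lt t ht.1 ht.2).symm
        exact tendsto_nhds_unique hcont h2
    have hccA : cc ∈ A := by
      refine ⟨⟨hcc0, hccle⟩, fun t ht => ?_⟩
      rcases lt_or_eq_of_le ht.2 with h | h
      · exact hzero_lt t ht.1 h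
      · rw [h]; exact hfcc
    have hccb : cc = b := by
      by_contra hne
      have hlt : cc < b := lt_of_le_of_ne hccle hne
      have hcnorm' : IntervalIntegrable (fun t => ‖c t‖) volume cc b := by
        apply hcnorm.mono_set
        rw [uIcc_of_le hccle, uIcc_of_le hb]
        exact Icc_subset_Icc hcc0 le_rfl
      have hΦcont : ContinuousOn (fun y => ∫ t in cc..y, ‖c t‖) (uIcc cc b) :=
        intervalIntegral.continuousOn_primitive_interval ((intervalIntegrable_iff').mp hcnorm')
      have hneIoc : (𝓝[Ioc cc b] cc).NeBot := by
        apply mem_closure_iff_nhdsWithin_neBot.mp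
        rw [closure_Ioc hlt.ne]
        exact ⟨le_rfl, hlt.le⟩
      have htend : Filter.Tendsto (fun y => ∫ t in cc..y, ‖c t‖) (𝓝[Ioc cc b] cc) (𝓝 0) := by
        have h : Filter.Tendsto (fun y => ∫ t in cc..y, ‖c t‖) (𝓝[uIcc cc b] cc)
            (𝓝 (∫ t in cc..cc, ‖c t‖)) :=
          hΦcont.continuousWithinAt (left_mem_uIcc : cc ∈ uIcc cc b)
        rw [intervalIntegral.integral_same] at h
        exact h.mono_left (nhdsWithin_mono _ (by rw [uIcc_of_le hlt.le]; exact Ioc_subset_Icc_self))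
      have hev : ∀ᶠ y in 𝓝[Ioc cc b] cc, (∫ t in cc..y, ‖c t‖) < 1/8 :=
        htend (Iio_mem_nhds (by norm_num : (0:ℝ) < 1/8))
      obtain ⟨y, hyIoc, hyΦ⟩ :
          ∃ y : ℝ, y ∈ Ioc cc b ∧ (∫ t in cc..y, ‖c t‖) < 1/8 := by
        have h2 : ∀ᶠ y in 𝓝[Ioc cc b] cc, y ∈ Ioc cc b := self_mem_nhdsWithin
        exact (h2.and hev).exists
      have hIccsub : Icc cc y ⊆ Ici (0:ℝ) := fun t ht => le_trans hcc0 ht.1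
      obtain ⟨ξ, hξmem, hξmax⟩ := isCompact_Icc.exists_isMaxOn
        (nonempty_Icc.mpr hyIoc.1.le) (hfc.mono hIccsub)
      set M := f ξ with hMdef
      have hMnn : 0 ≤ M := hfnn ξ
      have hfleM : ∀ t ∈ Icc cc y, f t ≤ M := fun t ht => hξmax ht
      -- the integral bound at ξ
      have hsub1 : IntervalIntegrable (fun t => ‖c t‖ * f t) volume 0 cc := by
        apply hint.mono_set
        rw [uIcc_of_le hcc0, uIcc_of_le hb]
        exact Icc_subset_Icc le_rfl hccle
      have hsub2 : IntervalIntegrable (fun t => ‖c t‖ * f t) volume cc ξ := by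
        apply hint.mono_set
        rw [uIcc_of_le hξmem.1, uIcc_of_le hb]
        exact Icc_subset_Icc hcc0 (le_trans hξmem.2 hyIoc.2)
      have hξ0 : 0 ≤ ξ := le_trans hcc0 hξmem.1
      have hkξ := hkey ξ hξ0
      have hsplitint : (∫ t in (0:ℝ)..ξ, ‖c t‖ * f t) =
          (∫ t in (0:ℝ)..cc, ‖c t‖ * f t) + ∫ t in cc..ξ, ‖c t‖ * f t :=
        (intervalIntegral.integral_add_adjacent_intervals hsub1 hsub2).symm
      have hzero1 : (∫ t in (0:ℝ)..cc, ‖c t‖ * f t) = 0 := by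
        have heq : EqOn (fun t => ‖c t‖ * f t) (fun _ => (0:ℝ)) (uIcc 0 cc) := by
          intro t ht
          rw [uIcc_of_le hcc0] at ht
          simp [hccA.2 t ht]
        rw [intervalIntegral.integral_congr heq]
        simp
      have hcint1 : IntervalIntegrable (fun t => ‖c t‖) volume cc ξ := by
        apply hcnorm.mono_set
        rw [uIcc_of_le hξmem.1, uIcc_of_le hb]
        exact Icc_subset_Icc hcc0 (le_trans hξmem.2 hyIoc.2)
      have hMbound : (∫ t in cc..ξ, ‖c t‖ * f t) ≤ (∫ t in cc..ξ, ‖c t‖) * M := by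
        rw [← intervalIntegral.integral_mul_const]
        apply intervalIntegral.integral_mono_on hξmem.1 hsub2 (hcint1.mul_const M)
        intro t ht
        exact mul_le_mul_of_nonneg_left (hfleM t ⟨ht.1, le_trans ht.2 hξmem.2⟩) (norm_nonneg _)
      have hcint2 : IntervalIntegrable (fun t => ‖c t‖) volume ξ y := by
        apply hcnorm.mono_set
        rw [uIcc_of_le hξmem.2, uIcc_of_le hb]
        exact Icc_subset_Icc hξ0 hyIoc.2
      have hΦmono : (∫ t in cc..ξ, ‖c t‖) ≤ ∫ t in cc..y, ‖c t‖ := by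
        rw [← intervalIntegral.integral_add_adjacent_intervals hcint1 hcint2]
        have : 0 ≤ ∫ t in ξ..y, ‖c t‖ :=
          intervalIntegral.integral_nonneg hξmem.2 (fun t _ => norm_nonneg _)
        linarith
      have hΦnn : 0 ≤ ∫ t in cc..ξ, ‖c t‖ :=
        intervalIntegral.integral_nonneg hξmem.1 (fun t _ => norm_nonneg _)
      have hMfin : M ≤ (1/2 : ℝ) * M := by
        rw [hsplitint, hzero1, zero_add] at hkξ
        have hkM : M ≤ 4 * ((∫ t in cc..ξ, ‖c t‖) * M) := by
          calc M ≤ 4 * ∫ t in cc..ξ, ‖c t‖ * f t := hkξ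
            _ ≤ 4 * ((∫ t in cc..ξ, ‖c t‖) * M) := by linarith [hMbound]
        have h8 : (∫ t in cc..ξ, ‖c t‖) ≤ 1/8 := le_of_lt (lt_of_le_of_lt hΦmono hyΦ)
        have h9 : (∫ t in cc..ξ, ‖c t‖) * M ≤ (1/8) * M :=
          mul_le_mul_of_nonneg_right h8 hMnn
        calc M ≤ 4 * ((∫ t in cc..ξ, ‖c t‖) * M) := hkM
          _ ≤ 4 * ((1/8) * M) := by linarith [h9]
          _ = (1/2 : ℝ) * M := by ring
      have hM0 : M ≤ 0 := by clear_value M; linarith [hMfin]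
      have hfy : ∀ t ∈ Icc cc y, f t = 0 := fun t ht =>
        le_antisymm (le_trans (hfleM t ht) hM0) (hfnn t)
      have hyA : y ∈ A := by
        refine ⟨⟨le_trans hcc0 hyIoc.1.le, hyIoc.2⟩, fun t ht => ?_⟩
        rcases le_or_gt t cc with h | h
        · exact hccA.2 t ⟨ht.1, h⟩
        · exact hfy t ⟨h.le, ht.2⟩
      have : y ≤ cc := le_csSup hbdd hyA
      exact absurd hyIoc.1 (not_lt.mpr this)
    rw [← hccb]
    exact hfcc
  -- conclude equality of matrices
  intro x hx
  have hfx0 := hfzero x hx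
  have hfx : f x = ‖G x 0 0 - H x 0 0‖ + ‖G x 0 1 - H x 0 1‖ +
      ‖G x 1 0 - H x 1 0‖ + ‖G x 1 1 - H x 1 1‖ := rfl
  rw [hfx] at hfx0
  have h00 := norm_nonneg (G x 0 0 - H x 0 0)
  have h01 := norm_nonneg (G x 0 1 - H x 0 1)
  have h10 := norm_nonneg (G x 1 0 - H x 1 0)
  have h11 := norm_nonneg (G x 1 1 - H x 1 1)
  have e : ∀ i j : Fin 2, G x i j = H x i j := by
    intro i j
    have : ‖G x i j - H x i j‖ = 0 := by
      fin_cases i <;> fin_cases j <;> simp only [Fin.mk_zero, Fin.mk_one] <;> linarith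
    rw [norm_eq_zero] at this
    exact sub_eq_zero.mp this
  ext i j
  exact e i j


lemma measurable_dDigit (d : ℕ) (n : ℤ) : Measurable (fun x : ℝ => dDigit d x n) := by
  have h1 : Measurable fun x : ℝ => ⌊x * (d:ℝ)^(-n)⌋ := (measurable_id.mul_const _).floor
  exact (measurable_of_countable fun z : ℤ => (z % (d:ℤ)).toNat).comp h1

lemma digit_support_subset (d : ℕ) (hd : 2 ≤ d) {k t : ℝ} (hk : 0 ≤ k) (ht : 0 ≤ t)
    {Bk Bx : ℕ} (hBk : k < (d:ℝ)^Bk) (hBt : t < (d:ℝ)^Bx) :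
    (Function.support fun m : ℤ => (dDigit d k m * dDigit d t (-1 - m) : ℕ)) ⊆
      ↑(Finset.Icc (-(Bx:ℤ) - 1) (Bk:ℤ)) := by
  have hd1 : (1:ℝ) < d := by exact_mod_cast hd
  have hd1' : 1 ≤ d := by omega
  intro m hm
  simp only [Function.mem_support] at hm
  simp only [Finset.coe_Icc, Set.mem_Icc]
  constructor
  · by_contra hcon
    push_neg at hcon
    apply hm
    have hzx : dDigit d t (-1 - m) = 0 := by
      apply dDigit_eq_zero d hd1' ht
      calc t < (d:ℝ)^Bx := hBt
        _ = (d:ℝ)^(Bx:ℤ) := by rw [zpow_natCast]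
        _ ≤ (d:ℝ)^(-1-m) := zpow_le_zpow_right₀ hd1.le (by omega)
    rw [hzx, Nat.mul_zero]
  · by_contra hcon
    push_neg at hcon
    apply hm
    have hzk : dDigit d k m = 0 := by
      apply dDigit_eq_zero d hd1' hk
      calc k < (d:ℝ)^Bk := hBk
        _ = (d:ℝ)^(Bk:ℤ) := by rw [zpow_natCast]
        _ ≤ (d:ℝ)^m := zpow_le_zpow_right₀ hd1.le (by omega)
    rw [hzk, Nat.zero_mul]

lemma norm_charFun (d : ℕ) (hd : 2 ≤ d) {γ : ℂ} (hγ : IsPrimitiveRoot γ d) (k t : ℝ) :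
    ‖charFun d γ k t‖ = 1 := by
  have h1 : ‖γ‖ = 1 := Complex.norm_eq_one_of_pow_eq_one hγ.pow_eq_one (by omega)
  unfold _root_.charFun
  rw [norm_pow, h1, one_pow]

lemma charFun_aesm (d : ℕ) (hd : 2 ≤ d) (γ : ℂ) (k : ℝ) (hk : 0 ≤ k) (x : ℝ) :
    AEStronglyMeasurable (fun t => charFun d γ k t) (volume.restrict (Icc (0:ℝ) x)) := by
  have hd1 : (1:ℝ) < d := by exact_mod_cast hd
  obtain ⟨Bk, hBk⟩ := pow_unbounded_of_one_lt k hd1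
  obtain ⟨Bx, hBx⟩ := pow_unbounded_of_one_lt x hd1
  set s : Finset ℤ := Finset.Icc (-(Bx:ℤ) - 1) (Bk:ℤ) with hs
  have hmeas : Measurable fun t : ℝ => γ ^ (∑ m ∈ s, dDigit d k m * dDigit d t (-1 - m)) := by
    apply Measurable.comp (measurable_of_countable fun e : ℕ => γ ^ e)
    apply Finset.measurable_sum
    intro m _
    exact (measurable_of_countable fun e : ℕ => dDigit d k m * e).comp
      (measurable_dDigit d (-1 - m))
  apply hmeas.aestronglyMeasurable.congr
  filter_upwards [ae_restrict_mem measurableSet_Icc] with t ht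
  unfold _root_.charFun
  congr 1
  symm
  apply finsum_eq_sum_of_support_subset
  exact digit_support_subset d hd hk ht.1 hBk (lt_of_le_of_lt ht.2 hBx)

lemma potential_intervalIntegrable (d : ℕ) (hd : 2 ≤ d) (γ : ℂ) (hγ : IsPrimitiveRoot γ d)
    (F : ℝ → ℂ) (hF : MemLp F 2 (volume.restrict (Ici 0))) (ω : Set ℝ) (hω : MeasurableSet ω)
    (k : ℝ) (hk : 0 ≤ k) (x : ℝ) (hx : 0 ≤ x) :
    IntervalIntegrable (fun t => (Set.indicator ω F) t * charFun d γ k t) volume 0 x := by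
  rw [intervalIntegrable_iff_integrableOn_Icc_of_le hx]
  have hFint : IntegrableOn F (Icc 0 x) volume := by
    have h1 : MemLp F 2 ((volume.restrict (Ici 0)).restrict (Icc 0 x)) := hF.restrict _
    rw [Measure.restrict_restrict measurableSet_Icc] at h1
    have hsub : Icc (0:ℝ) x ∩ Ici 0 = Icc 0 x := Set.inter_eq_left.mpr (fun t ht => ht.1)
    rw [hsub] at h1
    exact h1.integrable one_le_two
  have hF'int : IntegrableOn (Set.indicator ω F) (Icc 0 x) volume := hFint.indicator hω
  apply Integrable.mono' hF'int.norm
  · exact hF'int.aestronglyMeasurable.mul (charFun_aesm d hd γ k hk x)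
  · filter_upwards with t
    rw [norm_mul, norm_charFun d hd hγ, mul_one]

lemma intervalIntegral_conj {f : ℝ → ℂ} {a b : ℝ} :
    (∫ t in a..b, (starRingEnd ℂ) (f t)) = (starRingEnd ℂ) (∫ t in a..b, f t) := by
  simp only [intervalIntegral, ← integral_conj, map_sub]


theorem tile_phase_constancy (d : ℕ) (hd : 2 ≤ d) (γ : ℂ) (hγ : IsPrimitiveRoot γ d)
    (F : ℝ → ℂ) (hF : MemLp F 2 (volume.restrict (Set.Ici 0)))
    (κ n l : ℤ) (hn : 0 ≤ n) (hl : 0 ≤ l)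
    (k : ℝ) (hk : k ∈ Set.Ico ((d : ℝ) ^ κ * n) ((d : ℝ) ^ κ * (n + 1)))
    (G₀ G : ℝ → Matrix (Fin 2) (Fin 2) ℂ)
    (hG₀ : IsSolution d γ
      (Set.indicator (Set.Ico ((d : ℝ) ^ (-κ) * l) ((d : ℝ) ^ (-κ) * (l + 1))) F)
      ((d : ℝ) ^ κ * n) G₀)
    (hG : IsSolution d γ
      (Set.indicator (Set.Ico ((d : ℝ) ^ (-κ) * l) ((d : ℝ) ^ (-κ) * (l + 1))) F)
      k G) :
    ∃ j : ℤ, ∀ x : ℝ, 0 ≤ x →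
      G x = !![G₀ x 0 0, γ ^ j * G₀ x 0 1;
               (starRingEnd ℂ) (γ ^ j * G₀ x 0 1), (starRingEnd ℂ) (G₀ x 0 0)] := by
  classical
  obtain ⟨hk1, hk2⟩ := hk
  set ω : Set ℝ := Set.Ico ((d : ℝ) ^ (-κ) * l) ((d : ℝ) ^ (-κ) * (l + 1)) with hωdef
  set F' : ℝ → ℂ := Set.indicator ω F with hF'def
  set k₀ : ℝ := (d : ℝ) ^ κ * n with hk₀def
  have hd0 : (0:ℝ) < d := by exact_mod_cast (by omega : 0 < d)
  have hn' : (0:ℝ) ≤ (n:ℝ) := by exact_mod_cast hn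
  have hl' : (0:ℝ) ≤ (l:ℝ) := by exact_mod_cast hl
  have hκpos : (0:ℝ) < (d:ℝ)^κ := zpow_pos hd0 _
  have hk₀0 : 0 ≤ k₀ := mul_nonneg hκpos.le hn'
  have hk0 : 0 ≤ k := le_trans hk₀0 hk1
  set j₀ : ℕ := ∑ᶠ m : ℤ,
    if m < κ then dDigit d k m * dDigit d ((d:ℝ)^(-κ) * l) (-1 - m) else 0 with hj₀def
  set g : ℂ := γ ^ j₀ with hgdef
  have hγn : ‖γ‖ = 1 := Complex.norm_eq_one_of_pow_eq_one hγ.pow_eq_one (by omega)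
  have hgn : ‖g‖ = 1 := by rw [hgdef, norm_pow, hγn, one_pow]
  have hgconj : (starRingEnd ℂ) g * g = 1 := by
    rw [mul_comm, Complex.mul_conj]
    have h1 : Complex.normSq g = 1 := by
      rw [Complex.normSq_eq_norm_sq, hgn]; norm_num
    rw [h1]; norm_num
  have hcharphase : ∀ t, t ∈ ω → charFun d γ k t = g * charFun d γ k₀ t := by
    intro t ht
    unfold _root_.charFun
    rw [exponent_split d hd κ n l hn hl hk1 hk2 ht.1 ht.2, pow_add, ← hj₀def]
    ring
  set u : Fin 2 → ℂ := ![1, (starRingEnd ℂ) g] with hudef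
  set v : Fin 2 → ℂ := ![1, g] with hvdef
  have hu0 : u 0 = 1 := rfl
  have hu1 : u 1 = (starRingEnd ℂ) g := rfl
  have hv0 : v 0 = 1 := rfl
  have hv1 : v 1 = g := rfl
  have hWid : ∀ (t : ℝ) (i m : Fin 2),
      Wmat d γ F' k t i m = u i * Wmat d γ F' k₀ t i m * v m := by
    intro t i m
    have e00 : Wmat d γ F' k t 0 0 = 0 := rfl
    have e01 : Wmat d γ F' k t 0 1 = F' t * charFun d γ k t := rfl
    have e10 : Wmat d γ F' k t 1 0 = (starRingEnd ℂ) (F' t * charFun d γ k t) := rfl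
    have f00 : Wmat d γ F' k₀ t 0 0 = 0 := rfl
    have f01 : Wmat d γ F' k₀ t 0 1 = F' t * charFun d γ k₀ t := rfl
    have f10 : Wmat d γ F' k₀ t 1 0 = (starRingEnd ℂ) (F' t * charFun d γ k₀ t) := rfl
    have e11 : Wmat d γ F' k t 1 1 = 0 := rfl
    have f11 : Wmat d γ F' k₀ t 1 1 = 0 := rfl
    by_cases htω : t ∈ ω
    · have hph := hcharphase t htω
      fin_cases i <;> fin_cases m <;>
        simp only [Fin.mk_zero, Fin.mk_one, e00, e01, e10, e11, f00, f01, f10, f11,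
          hu0, hu1, hv0, hv1, hph, map_mul] <;> ring
    · have hF'0 : F' t = 0 := Set.indicator_of_notMem htω F
      fin_cases i <;> fin_cases m <;>
        simp only [Fin.mk_zero, Fin.mk_one, e00, e01, e10, e11, f00, f01, f10, f11,
          hu0, hu1, hv0, hv1, hF'0, map_mul, map_zero, zero_mul, mul_zero, one_mul] <;> ring
  set U : Matrix (Fin 2) (Fin 2) ℂ := !![1, 0; 0, (starRingEnd ℂ) g] with hUdef
  set V : Matrix (Fin 2) (Fin 2) ℂ := !![1, 0; 0, g] with hVdef
  set Hm : ℝ → Matrix (Fin 2) (Fin 2) ℂ := fun x => U * G₀ x * V with hHmdef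
  have hUMV : ∀ (M : Matrix (Fin 2) (Fin 2) ℂ) (i j : Fin 2),
      (U * M * V) i j = u i * M i j * v j := by
    intro M i j
    have hU00 : U 0 0 = 1 := rfl
    have hU01 : U 0 1 = 0 := rfl
    have hU10 : U 1 0 = 0 := rfl
    have hU11 : U 1 1 = (starRingEnd ℂ) g := rfl
    have hV00 : V 0 0 = 1 := rfl
    have hV01 : V 0 1 = 0 := rfl
    have hV10 : V 1 0 = 0 := rfl
    have hV11 : V 1 1 = g := rfl
    simp only [Matrix.mul_apply, Fin.sum_univ_two]
    fin_cases i <;> fin_cases j <;>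
      simp only [Fin.mk_zero, Fin.mk_one, hU00, hU01, hU10, hU11, hV00, hV01, hV10, hV11,
        hu0, hu1, hv0, hv1] <;> ring
  have hHmentry : ∀ (x : ℝ) (i j : Fin 2), Hm x i j = u i * G₀ x i j * v j :=
    fun x i j => hUMV (G₀ x) i j
  have hHmcont : ContinuousOn Hm (Ici 0) :=
    (continuousOn_const.mul hG₀.1).mul continuousOn_const
  have hone : ∀ i j : Fin 2,
      u i * (1 : Matrix (Fin 2) (Fin 2) ℂ) i j * v j = (1 : Matrix (Fin 2) (Fin 2) ℂ) i j := by
    intro i j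
    have i00 : (1 : Matrix (Fin 2) (Fin 2) ℂ) 0 0 = 1 := by simp
    have i01 : (1 : Matrix (Fin 2) (Fin 2) ℂ) 0 1 = 0 := by simp
    have i10 : (1 : Matrix (Fin 2) (Fin 2) ℂ) 1 0 = 0 := by simp
    have i11 : (1 : Matrix (Fin 2) (Fin 2) ℂ) 1 1 = 1 := by simp
    fin_cases i <;> fin_cases j <;>
      simp [Matrix.one_apply, hu0, hu1, hv0, hv1, hgconj]
  have hv0u0 : v 0 * u 0 = 1 := by rw [hv0, hu0, mul_one]
  have hv1u1 : v 1 * u 1 = 1 := by rw [hv1, hu1, mul_comm]; exact hgconj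
  have hmulid : ∀ (t : ℝ) (i j : Fin 2),
      (Wmat d γ F' k t * Hm t) i j = u i * ((Wmat d γ F' k₀ t * G₀ t) i j) * v j := by
    intro t i j
    rw [Matrix.mul_apply, Matrix.mul_apply, Fin.sum_univ_two, Fin.sum_univ_two,
      hWid t i 0, hWid t i 1, hHmentry t 0 j, hHmentry t 1 j]
    linear_combination (u i * v j * Wmat d γ F' k₀ t i 0 * G₀ t 0 j) * hv0u0 +
      (u i * v j * Wmat d γ F' k₀ t i 1 * G₀ t 1 j) * hv1u1
  have hHsol : ∀ x : ℝ, 0 ≤ x → ∀ i j : Fin 2,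
      Hm x i j = (1 : Matrix (Fin 2) (Fin 2) ℂ) i j +
        ∫ t in (0:ℝ)..x, (Wmat d γ F' k t * Hm t) i j := by
    intro x hx i j
    rw [hHmentry x i j, hG₀.2 x hx i j,
      show ∀ A B : ℂ, u i * (A + B) * v j = u i * A * v j + u i * B * v j from
        fun A B => by ring]
    congr 1
    · exact hone i j
    · rw [← intervalIntegral.integral_const_mul, ← intervalIntegral.integral_mul_const]
      symm
      apply intervalIntegral.integral_congr
      intro t _
      exact hmulid t i j
  set c1 : ℝ → ℂ := fun t => F' t * charFun d γ k t with hc1def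
  set c0 : ℝ → ℂ := fun t => F' t * charFun d γ k₀ t with hc0def
  have hc1int : ∀ x : ℝ, 0 ≤ x → IntervalIntegrable c1 volume 0 x := fun x hx =>
    potential_intervalIntegrable d hd γ hγ F hF ω measurableSet_Ico k hk0 x hx
  have hc0int : ∀ x : ℝ, 0 ≤ x → IntervalIntegrable c0 volume 0 x := fun x hx =>
    potential_intervalIntegrable d hd γ hγ F hF ω measurableSet_Ico k₀ hk₀0 x hx
  have hGH : ∀ x : ℝ, 0 ≤ x → G x = Hm x := by
    apply volterra_unique c1 hc1int G Hm hG.1 hHmcont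
    · intro x hx i j
      exact hG.2 x hx i j
    · intro x hx i j
      exact hHsol x hx i j
  -- symmetry of G₀
  set G₀c : ℝ → Matrix (Fin 2) (Fin 2) ℂ :=
    fun x => Matrix.of fun i j => (starRingEnd ℂ) (G₀ x (i+1) (j+1)) with hG₀cdef
  have hG₀centry : ∀ (x : ℝ) (i j : Fin 2),
      G₀c x i j = (starRingEnd ℂ) (G₀ x (i+1) (j+1)) := fun x i j => rfl
  have hG₀ccont : ContinuousOn G₀c (Ici 0) := by
    apply continuousOn_pi.mpr
    intro i
    apply continuousOn_pi.mpr
    intro j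
    have hc1' : Continuous (fun M : Matrix (Fin 2) (Fin 2) ℂ => M (i+1) (j+1)) :=
      (continuous_apply (j+1)).comp (continuous_apply (i+1))
    have h1 : ContinuousOn (fun x => G₀ x (i+1) (j+1)) (Ici (0:ℝ)) :=
      hc1'.comp_continuousOn hG₀.1
    exact Complex.continuous_conj.comp_continuousOn h1
  have honec : ∀ i j : Fin 2,
      (starRingEnd ℂ) ((1 : Matrix (Fin 2) (Fin 2) ℂ) (i+1) (j+1)) =
        (1 : Matrix (Fin 2) (Fin 2) ℂ) i j := by
    intro i j
    fin_cases i <;> fin_cases j <;> simp [Matrix.one_apply]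
  have hmir : ∀ (t : ℝ) (i j : Fin 2),
      (starRingEnd ℂ) ((Wmat d γ F' k₀ t * G₀ t) (i+1) (j+1)) =
        (Wmat d γ F' k₀ t * G₀c t) i j := by
    intro t i j
    have f00 : Wmat d γ F' k₀ t 0 0 = 0 := rfl
    have f01 : Wmat d γ F' k₀ t 0 1 = c0 t := rfl
    have f10 : Wmat d γ F' k₀ t 1 0 = (starRingEnd ℂ) (c0 t) := rfl
    have f11 : Wmat d γ F' k₀ t 1 1 = 0 := rfl
    have g0 : G₀c t 0 j = (starRingEnd ℂ) (G₀ t 1 (j+1)) := rfl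
    have g1 : G₀c t 1 j = (starRingEnd ℂ) (G₀ t 0 (j+1)) := rfl
    rw [Matrix.mul_apply, Matrix.mul_apply, Fin.sum_univ_two, Fin.sum_univ_two,
      map_add, map_mul, map_mul]
    fin_cases i <;>
      simp only [Fin.mk_zero, Fin.mk_one, show ((0:Fin 2)+1) = 1 from rfl,
        show ((1:Fin 2)+1) = 0 from rfl, f00, f01, f10, f11, g0, g1, map_zero,
        Complex.conj_conj, zero_mul, mul_zero, zero_add, add_zero] <;> ring
  have hG₀csol : ∀ x : ℝ, 0 ≤ x → ∀ i j : Fin 2,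
      G₀c x i j = (1 : Matrix (Fin 2) (Fin 2) ℂ) i j +
        ∫ t in (0:ℝ)..x, (Wmat d γ F' k₀ t * G₀c t) i j := by
    intro x hx i j
    rw [hG₀centry x i j, hG₀.2 x hx (i+1) (j+1), map_add, honec i j,
      ← intervalIntegral_conj]
    congr 1
    apply intervalIntegral.integral_congr
    intro t _
    exact hmir t i j
  have hsym : ∀ x : ℝ, 0 ≤ x → G₀ x = G₀c x := by
    apply volterra_unique c0 hc0int G₀ G₀c hG₀.1 hG₀ccont
    · intro x hx i j
      exact hG₀.2 x hx i j
    · intro x hx i j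
      exact hG₀csol x hx i j
  refine ⟨(j₀ : ℤ), ?_⟩
  intro x hx
  have h10 : G₀ x 1 0 = (starRingEnd ℂ) (G₀ x 0 1) := by
    have h := congrFun (congrFun (hsym x hx) 1) 0
    rw [h, hG₀centry x 1 0, show ((1:Fin 2)+1) = 0 from rfl,
      show ((0:Fin 2)+1) = 1 from rfl]
  have h11 : G₀ x 1 1 = (starRingEnd ℂ) (G₀ x 0 0) := by
    have h := congrFun (congrFun (hsym x hx) 1) 1
    rw [h, hG₀centry x 1 1, show ((1:Fin 2)+1) = 0 from rfl]
  rw [hGH x hx]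
  have hz : γ ^ ((j₀:ℤ)) = g := by rw [zpow_natCast, hgdef]
  ext i j
  fin_cases i <;> fin_cases j <;> simp only [Fin.mk_zero, Fin.mk_one]
  · rw [show (!![G₀ x 0 0, γ ^ (j₀:ℤ) * G₀ x 0 1;
        (starRingEnd ℂ) (γ ^ (j₀:ℤ) * G₀ x 0 1), (starRingEnd ℂ) (G₀ x 0 0)] :
        Matrix (Fin 2) (Fin 2) ℂ) 0 0 = G₀ x 0 0 from rfl]
    rw [show Hm x 0 0 = u 0 * G₀ x 0 0 * v 0 from hHmentry x 0 0, hu0, hv0]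
    ring
  · rw [show (!![G₀ x 0 0, γ ^ (j₀:ℤ) * G₀ x 0 1;
        (starRingEnd ℂ) (γ ^ (j₀:ℤ) * G₀ x 0 1), (starRingEnd ℂ) (G₀ x 0 0)] :
        Matrix (Fin 2) (Fin 2) ℂ) 0 1 = γ ^ (j₀:ℤ) * G₀ x 0 1 from rfl]
    rw [show Hm x 0 1 = u 0 * G₀ x 0 1 * v 1 from hHmentry x 0 1, hu0, hv1, hz]
    ring
  · rw [show (!![G₀ x 0 0, γ ^ (j₀:ℤ) * G₀ x 0 1;
        (starRingEnd ℂ) (γ ^ (j₀:ℤ) * G₀ x 0 1), (starRingEnd ℂ) (G₀ x 0 0)] :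
        Matrix (Fin 2) (Fin 2) ℂ) 1 0 = (starRingEnd ℂ) (γ ^ (j₀:ℤ) * G₀ x 0 1) from rfl]
    rw [show Hm x 1 0 = u 1 * G₀ x 1 0 * v 0 from hHmentry x 1 0, hu1, hv0, h10,
      map_mul, hz]
    ring
  · rw [show (!![G₀ x 0 0, γ ^ (j₀:ℤ) * G₀ x 0 1;
        (starRingEnd ℂ) (γ ^ (j₀:ℤ) * G₀ x 0 1), (starRingEnd ℂ) (G₀ x 0 0)] :
        Matrix (Fin 2) (Fin 2) ℂ) 1 1 = (starRingEnd ℂ) (G₀ x 0 0) from rfl]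
    rw [show Hm x 1 1 = u 1 * G₀ x 1 1 * v 1 from hHmentry x 1 1, hu1, hv1, h11]
    linear_combination ((starRingEnd ℂ) (G₀ x 0 0)) * hgconj
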